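/- arXiv:1704.07192 — 6 statements merged into one kernel-verified Lean document; each statement's English description precedes it below -/
import Mathlib

section
/- Let A be a commutative noetherian ring and P a finitely generated projective A-module of constant rank 1. Then for every k ≥ 1, every permutation σ of {1,…,k}, and all elements m₁,…,m_k ∈ P, one has m₁ ⊗ m₂ ⊗ ⋯ ⊗ m_k = m_{σ(1)} ⊗ m_{σ(2)} ⊗ ⋯ ⊗ m_{σ(k)} in the k-fold tensor power P^{⊗k}. Consequently, the canonical quotient map P^{⊗k} → Sym^k_A P is an isomorphism of A-modules. -/
open PiTensorProduct

/-- The submodule of the `k`-th tensor power of `P` spanned by the differences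
`m₁ ⊗ ⋯ ⊗ m_k − m_{σ(1)} ⊗ ⋯ ⊗ m_{σ(k)}`; the `k`-th symmetric power is the quotient
of the tensor power by this submodule. -/
def symRel (A : Type*) [CommRing A] (P : Type*) [AddCommGroup P] [Module A P] (k : ℕ) :
    Submodule A (PiTensorProduct A (fun _ : Fin k => P)) :=
  Submodule.span A
    {x | ∃ (m : Fin k → P) (σ : Equiv.Perm (Fin k)), x = tprod A m - tprod A (m ∘ σ)}

/-- The `k`-th symmetric power `Sym^k_A P`, as the canonical quotient of the `k`-fold
tensor power `P^{⊗k}`. -/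
abbrev SymPow (A : Type*) [CommRing A] (P : Type*) [AddCommGroup P] [Module A P] (k : ℕ) :=
  PiTensorProduct A (fun _ : Fin k => P) ⧸ symRel A P k

/-- Key fact: in a rank-one module, `f x • y = f y • x` for every linear functional `f`. -/
lemma rankOne_smul_comm
    (A : Type*) [CommRing A]
    (P : Type*) [AddCommGroup P] [Module A P]
    (hrank : ∀ (𝔭 : Ideal A) [𝔭.IsPrime],
      Nonempty (LocalizedModule 𝔭.primeCompl P ≃ₗ[Localization 𝔭.primeCompl]
        Localization 𝔭.primeCompl))
    (f : P →ₗ[A] A) (x y : P) : f x • y = f y • x := by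
  apply Module.eq_of_localization_maximal (R := A) (M := P)
    (fun 𝔭 _ => LocalizedModule 𝔭.primeCompl P)
    (fun 𝔭 _ => LocalizedModule.mkLinearMap 𝔭.primeCompl P)
  intro 𝔭 h𝔭
  haveI : 𝔭.IsPrime := h𝔭.isPrime
  obtain ⟨g⟩ := hrank 𝔭
  set S := 𝔭.primeCompl with hS
  set L := Localization S with hL
  set mkP : P →ₗ[A] LocalizedModule S P := LocalizedModule.mkLinearMap S P with hmkP
  set h : LocalizedModule S P →ₗ[A] L :=
    IsLocalizedModule.map S mkP (Algebra.linearMap A L) f with hh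
  have hscal : ∀ (c : L) (v : LocalizedModule S P), h (c • v) = c * h v := by
    intro c v
    have h2 := (h.extendScalarsOfIsLocalization S L).map_smul c v
    rw [smul_eq_mul] at h2
    exact h2
  have hv : ∀ v : LocalizedModule S P, h v = g v * h (g.symm 1) := by
    intro v
    conv_lhs => rw [show v = g v • g.symm 1 by
      rw [← map_smul, smul_eq_mul, mul_one, g.symm_apply_apply]]
    rw [hscal]
  have hkey : ∀ v w : LocalizedModule S P, h v * g w = h w * g v := by
    intro v w
    rw [hv v, hv w]; ring
  have hmkx : h (mkP x) = algebraMap A L (f x) := by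
    simp [hh, IsLocalizedModule.map_apply]
  have hmky : h (mkP y) = algebraMap A L (f y) := by
    simp [hh, IsLocalizedModule.map_apply]
  show mkP (f x • y) = mkP (f y • x)
  apply g.injective
  have gsm : ∀ (a : A) (v : LocalizedModule S P), g (a • v) = algebraMap A L a * g v := by
    intro a v
    rw [← algebraMap_smul L a v, map_smul, smul_eq_mul]
  rw [map_smul mkP (f x) y, map_smul mkP (f y) x, gsm, gsm, ← hmkx, ← hmky, hkey]

/-- A finite projective module has a finite dual basis. -/
lemma exists_dual_basis
    (A : Type*) [CommRing A]
    (P : Type*) [AddCommGroup P] [Module A P] [Module.Finite A P] [Module.Projective A P] :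
    ∃ (n : ℕ) (p : Fin n → P) (f : Fin n → (P →ₗ[A] A)),
      ∀ x : P, ∑ i, f i x • p i = x := by
  obtain ⟨n, π, hπ⟩ := Module.Finite.exists_fin' A P
  obtain ⟨s, hs⟩ := Module.projective_lifting_property π LinearMap.id hπ
  refine ⟨n, fun i => π (Pi.single i 1), fun i => (LinearMap.proj i).comp s, fun x => ?_⟩
  have h1 : ∀ i, (s x i) • π (Pi.single i 1) = π (Pi.single i (s x i)) := by
    intro i
    rw [← map_smul]
    congr 1
    ext t
    by_cases h : t = i <;> simp [Pi.single_apply, h]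
  calc ∑ i, ((LinearMap.proj i).comp s) x • π (Pi.single i 1)
      = ∑ i, π (Pi.single i (s x i)) := by
        refine Finset.sum_congr rfl fun i _ => h1 i
    _ = π (∑ i, Pi.single i (s x i)) := by rw [map_sum]
    _ = π (s x) := by rw [Finset.univ_sum_single]
    _ = x := LinearMap.congr_fun hs x

/-- Let `A` be a commutative noetherian ring and `P` a finitely generated
projective `A`-module of constant rank `1` (i.e. `P_𝔭 ≅ A_𝔭` for every prime `𝔭`).  Then for
every `k ≥ 1`, every permutation `σ` of `Fin k` and all `m₁, …, m_k ∈ P` one has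
`m₁ ⊗ ⋯ ⊗ m_k = m_{σ(1)} ⊗ ⋯ ⊗ m_{σ(k)}` in `P^{⊗k}`; consequently the canonical quotient
map `P^{⊗k} → Sym^k_A P` is an isomorphism (it is a bijection). -/
theorem tensorPower_perm_invariant_of_rank_one
    (A : Type*) [CommRing A] [IsNoetherianRing A]
    (P : Type*) [AddCommGroup P] [Module A P] [Module.Finite A P] [Module.Projective A P]
    (hrank : ∀ (𝔭 : Ideal A) [𝔭.IsPrime],
      Nonempty (LocalizedModule 𝔭.primeCompl P ≃ₗ[Localization 𝔭.primeCompl]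
        Localization 𝔭.primeCompl))
    (k : ℕ) (hk : 1 ≤ k) :
    (∀ (σ : Equiv.Perm (Fin k)) (m : Fin k → P), tprod A m = tprod A (m ∘ σ)) ∧
      Function.Bijective (symRel A P k).mkQ := by
  have K : ∀ (f : P →ₗ[A] A) (x y : P), f x • y = f y • x :=
    rankOne_smul_comm A P hrank
  obtain ⟨n, p, fd, hd⟩ := exists_dual_basis A P
  -- expansion of a coordinate via the dual basis
  have expand : ∀ (M : Fin k → P) (j : Fin k) (z : P),
      tprod A (Function.update M j z)
        = ∑ t, fd t z • tprod A (Function.update M j (p t)) := by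
    intro M j z
    conv_lhs => rw [← hd z]
    rw [MultilinearMap.map_update_sum]
    refine Finset.sum_congr rfl fun t _ => ?_
    rw [MultilinearMap.map_update_smul]
  -- core: swapping the values at two distinct coordinates
  have core : ∀ (m : Fin k → P) (i j : Fin k), i ≠ j → ∀ (x y : P),
      tprod A (Function.update (Function.update m i x) j y)
        = tprod A (Function.update (Function.update m i y) j x) := by
    intro m i j hij x y
    rw [expand (Function.update m i x) j y, expand (Function.update m i y) j x]
    refine Finset.sum_congr rfl fun t _ => ?_
    rw [Function.update_comm hij x (p t) m, Function.update_comm hij y (p t) m]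
    rw [← MultilinearMap.map_update_smul (PiTensorProduct.tprod A)
          (Function.update m j (p t)) i (fd t y) x,
        ← MultilinearMap.map_update_smul (PiTensorProduct.tprod A)
          (Function.update m j (p t)) i (fd t x) y,
        K (fd t) y x]
  -- swap invariance
  have swapinv : ∀ (m : Fin k → P) (i j : Fin k),
      tprod A m = tprod A (m ∘ Equiv.swap i j) := by
    intro m i j
    rcases eq_or_ne i j with rfl | hij
    · simp
    have hms : m ∘ Equiv.swap i j
        = Function.update (Function.update m i (m j)) j (m i) := by
      funext t
      rcases eq_or_ne t j with rfl | htj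
      · simp [Equiv.swap_apply_right, Function.update_self]
      rcases eq_or_ne t i with rfl | hti
      · simp [Equiv.swap_apply_left, Function.update_of_ne hij,
          Function.update_self]
      · simp [Equiv.swap_apply_of_ne_of_ne hti htj, Function.update_of_ne htj,
          Function.update_of_ne hti]
    have hm : m = Function.update (Function.update m i (m i)) j (m j) := by
      simp [Function.update_eq_self]
    rw [hms]
    conv_lhs => rw [hm]
    exact core m i j hij (m i) (m j)
  -- general permutation invariance
  have main : ∀ (σ : Equiv.Perm (Fin k)) (m : Fin k → P),
      tprod A m = tprod A (m ∘ σ) := by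
    intro σ
    refine Equiv.Perm.swap_induction_on σ (fun m => ?_) (fun σ' a b hab ih m => ?_)
    · have h0 : m ∘ (1 : Equiv.Perm (Fin k)) = m := rfl
      rw [h0]
    · have h1 : m ∘ (Equiv.swap a b * σ') = (m ∘ Equiv.swap a b) ∘ σ' := by
        funext t; simp [Function.comp, Equiv.Perm.mul_apply]
      rw [h1, ← ih (m ∘ Equiv.swap a b)]
      exact swapinv m a b
  refine ⟨main, ?_, Submodule.mkQ_surjective _⟩
  have hrel : symRel A P k = ⊥ := by
    rw [symRel, Submodule.span_eq_bot]
    rintro x ⟨m, σ, rfl⟩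
    rw [sub_eq_zero]
    exact main σ m
  rw [← LinearMap.ker_eq_bot, Submodule.ker_mkQ, hrel]
end

section
/- Let N ≥ 2, V = ℂ^N with basis v₁,…,v_N and dual basis f₁,…,f_N of V*, and A a commutative noetherian ℂ-algebra. Let P be a finitely generated projective A-module of constant rank 1, α : P → V ⊗_ℂ A a split injective A-linear map, and β : P^∨ → V* ⊗_ℂ A an A-linear map with α^∨ ∘ β = 0. Define, on W_k := Sym^k_A P^∨ (0 ≤ k ≤ N−1), for f ∈ V* the raising map W_k → W_{k+1}, u¹⋯u^k ↦ α^∨(f)·u¹⋯u^k, and for v ∈ V the contraction map W_k → W_{k−1}, u¹⋯u^k ↦ u¹(β^∨(v))·u²⋯u^k. Then these maps satisfy: (1) the maps for any two f, f' ∈ V* commute and the maps for any two v, v' ∈ V commute; (2) for all i, j, the composite maps f_i ∘ v_j and v_j ∘ f_i on W_k are both equal to multiplication by the scalar a_{ij} := (α^∨ f_i)(β^∨ v_j) ∈ A; (3) ∑_{i=1}^N f_i ∘ v_i = 0 = ∑_{i=1}^N v_i ∘ f_i as maps W_k → W_k. -/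
open PiTensorProduct

/-- The image `u¹ ⋯ u^k` of `u¹ ⊗ ⋯ ⊗ u^k` in the symmetric power `Sym^k_A P`. -/
noncomputable def mkSym (A : Type*) [CommRing A] {P : Type*} [AddCommGroup P] [Module A P]
    {k : ℕ} (m : Fin k → P) : SymPow A P k :=
  (symRel A P k).mkQ (tprod A m)

section Aux

variable {A : Type*} [CommRing A] {Q : Type*} [AddCommGroup Q] [Module A Q]

theorem mkSym_perm {k : ℕ} (m : Fin k → Q) (σ : Equiv.Perm (Fin k)) :
    mkSym A m = mkSym A (m ∘ σ) := by
  have h : tprod A m - tprod A (m ∘ σ) ∈ symRel A Q k :=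
    Submodule.subset_span ⟨m, σ, rfl⟩
  unfold mkSym
  rw [← sub_eq_zero, ← map_sub, Submodule.mkQ_apply]
  exact (Submodule.Quotient.mk_eq_zero _).2 h

theorem mkSym_cons_smul {k : ℕ} (c : A) (a : Q) (t : Fin k → Q) :
    mkSym A (Fin.cons (c • a) t) = c • mkSym A (Fin.cons a t) := by
  have h1 : (Fin.cons (c • a) t : Fin (k+1) → Q) = Function.update (Fin.cons a t) 0 (c • a) := by
    rw [Fin.update_cons_zero]
  unfold mkSym
  rw [h1, MultilinearMap.map_update_smul, map_smul, Fin.update_cons_zero]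

theorem symPow_hom_ext {k : ℕ} {M : Type*} [AddCommGroup M] [Module A M]
    {f g : SymPow A Q k →ₗ[A] M}
    (h : ∀ m : Fin k → Q, f (mkSym A m) = g (mkSym A m)) : f = g := by
  refine Submodule.linearMap_qext _ ?_
  exact PiTensorProduct.ext (MultilinearMap.ext fun m => h m)

theorem cons_comp_succ {γ : Type*} {k : ℕ} (a : γ) (t : Fin k → γ) :
    (Fin.cons a t : Fin (k+1) → γ) ∘ Fin.succ = t := by
  funext i
  simp

theorem cons_cons_comp_swap {γ : Type*} {k : ℕ} (a b : γ) (u : Fin k → γ) :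
    (Fin.cons a (Fin.cons b u) : Fin (k+2) → γ) ∘ (Equiv.swap 0 1) =
      Fin.cons b (Fin.cons a u) := by
  funext i
  simp only [Function.comp_apply]
  refine Fin.cases ?_ (fun j => ?_) i
  · rw [Equiv.swap_apply_left, Fin.cons_zero, ← Fin.succ_zero_eq_one', Fin.cons_succ,
      Fin.cons_zero]
  · refine Fin.cases ?_ (fun m => ?_) j
    · rw [Fin.succ_zero_eq_one', Equiv.swap_apply_right, Fin.cons_zero, ← Fin.succ_zero_eq_one',
        Fin.cons_succ, Fin.cons_zero]
    · have h1 : (m.succ.succ : Fin (k+2)) ≠ 0 := Fin.succ_ne_zero _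
      have h2 : (m.succ.succ : Fin (k+2)) ≠ 1 := by
        rw [← Fin.succ_zero_eq_one]
        exact fun h => Fin.succ_ne_zero m (Fin.succ_injective _ h)
      simp [Equiv.swap_apply_of_ne_of_ne h1 h2]

theorem mkSym_cons_cons_swap {k : ℕ} (a b : Q) (u : Fin k → Q) :
    mkSym A (Fin.cons a (Fin.cons b u)) = mkSym A (Fin.cons b (Fin.cons a u)) := by
  rw [mkSym_perm (Fin.cons a (Fin.cons b u)) (Equiv.swap 0 1), cons_cons_comp_swap]

end Aux

set_option maxHeartbeats 2000000

/-- `N = n + 2 ≥ 2`, `V = ℂ^N` with standard basis `v₁,…,v_N` and dual basis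
`f₁,…,f_N`; `A` is a commutative noetherian `ℂ`-algebra; `P` is a finitely generated projective
`A`-module of constant rank one; `α : P → V ⊗_ℂ A ≅ A^N` is a split injective `A`-linear map
and `β : P^∨ → V^* ⊗_ℂ A ≅ A^N` (coordinates with respect to the dual basis, so that
`β u j = β(u)(v_j) = u(β^∨ v_j)`) is an `A`-linear map with `α^∨ ∘ β = 0`.  On
`W_k := Sym^k_A P^∨` (`0 ≤ k ≤ N−1`) consider the raising maps (for `f = ∑ cᵢ fᵢ ∈ V^*`)
`u¹⋯u^k ↦ α^∨(f)·u¹⋯u^k` where `α^∨(f) = ∑ cᵢ • (fᵢ ∘ α) ∈ P^∨`, and the lowering maps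
(for `v = ∑ cⱼ vⱼ ∈ V`) `u¹⋯u^k ↦ u¹(β^∨(v))·u²⋯u^k = (∑ cⱼ β(u¹)ⱼ)·u²⋯u^k`.
Then: (1) any two raising maps commute and any two lowering maps commute;
(2) the composites `fᵢ ∘ vⱼ` and `vⱼ ∘ fᵢ` are both multiplication by the scalar
`a_{ij} = (α^∨ fᵢ)(β^∨ vⱼ) ∈ A`; (3) `∑ᵢ fᵢ ∘ vᵢ = 0 = ∑ᵢ vᵢ ∘ fᵢ`. -/
theorem quiver_relations_for_rank_one_triple
    (n : ℕ) (A : Type*) [CommRing A] [IsNoetherianRing A] [Algebra ℂ A]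
    (P : Type*) [AddCommGroup P] [Module A P] [Module.Finite A P] [Module.Projective A P]
    (hrank : ∀ (𝔭 : Ideal A) [𝔭.IsPrime],
      Nonempty (LocalizedModule 𝔭.primeCompl P ≃ₗ[Localization 𝔭.primeCompl]
        Localization 𝔭.primeCompl))
    (α : P →ₗ[A] (Fin (n + 2) → A))
    (hα : ∃ ρ : (Fin (n + 2) → A) →ₗ[A] P, ρ.comp α = LinearMap.id)
    (β : Module.Dual A P →ₗ[A] (Fin (n + 2) → A))
    (hβ : ∀ (u : Module.Dual A P) (p : P), ∑ i, β u i * α p i = 0)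
    -- the raising maps `f : W_k → W_{k+1}` (for `f ∈ V^*` with coordinates `c`)
    (raise : (Fin (n + 2) → ℂ) → ∀ k : Fin (n + 1),
      SymPow A (Module.Dual A P) k.val →ₗ[A] SymPow A (Module.Dual A P) (k.val + 1))
    (hraise : ∀ (c : Fin (n + 2) → ℂ) (k : Fin (n + 1)) (u : Fin k.val → Module.Dual A P),
      raise c k (mkSym A u) =
        mkSym A (Fin.cons (∑ i, algebraMap ℂ A (c i) • ((LinearMap.proj i).comp α)) u))
    -- the lowering maps `v : W_{k+1} → W_k` (for `v ∈ V` with coordinates `c`)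
    (lower : (Fin (n + 2) → ℂ) → ∀ k : Fin (n + 1),
      SymPow A (Module.Dual A P) (k.val + 1) →ₗ[A] SymPow A (Module.Dual A P) k.val)
    (hlower : ∀ (c : Fin (n + 2) → ℂ) (k : Fin (n + 1))
        (u : Fin (k.val + 1) → Module.Dual A P),
      lower c k (mkSym A u) =
        (∑ j, algebraMap ℂ A (c j) * β (u 0) j) • mkSym A (u ∘ Fin.succ)) :
    -- (1) raising maps commute, lowering maps commute
    (∀ (c c' : Fin (n + 2) → ℂ) (k : Fin n),
      (raise c' k.succ).comp (raise c k.castSucc) = (raise c k.succ).comp (raise c' k.castSucc)) ∧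
    (∀ (c c' : Fin (n + 2) → ℂ) (k : Fin n),
      (lower c' k.castSucc).comp (lower c k.succ) = (lower c k.castSucc).comp (lower c' k.succ)) ∧
    -- (2) `fᵢ ∘ vⱼ` and `vⱼ ∘ fᵢ` are multiplication by `a_{ij} = (α^∨ fᵢ)(β^∨ vⱼ)`
    (∀ (i j : Fin (n + 2)) (k : Fin (n + 1)),
      (raise (Pi.single i 1) k).comp (lower (Pi.single j 1) k) =
        β ((LinearMap.proj i).comp α) j • LinearMap.id ∧
      (lower (Pi.single j 1) k).comp (raise (Pi.single i 1) k) =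
        β ((LinearMap.proj i).comp α) j • LinearMap.id) ∧
    -- (3) `∑ᵢ fᵢ ∘ vᵢ = 0 = ∑ᵢ vᵢ ∘ fᵢ`
    (∀ k : Fin (n + 1),
      ∑ i, (raise (Pi.single i 1) k).comp (lower (Pi.single i 1) k) = 0 ∧
      ∑ i, (lower (Pi.single i 1) k).comp (raise (Pi.single i 1) k) = 0) := by
  classical
  obtain ⟨ρ, hρ⟩ := hα
  -- notation
  set g : Fin (n + 2) → Module.Dual A P := fun i => (LinearMap.proj i).comp α with hg
  -- expansion of a dual element in terms of the `g i`
  have hexp : ∀ p : Module.Dual A P, p = ∑ l, p (ρ (Pi.single l 1)) • g l := by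
    intro p
    ext x
    have hx : ρ (α x) = x := LinearMap.congr_fun hρ x
    have hsum : α x = ∑ l, α x l • (Pi.single l 1 : Fin (n+2) → A) := by
      ext j
      simp [Pi.single_apply]
    have h1 : p x = ∑ l, α x l * p (ρ (Pi.single l 1)) := by
      conv_lhs => rw [← hx, hsum]
      simp [smul_eq_mul]
    rw [h1]
    simp only [LinearMap.sum_apply, LinearMap.smul_apply, smul_eq_mul, hg,
      LinearMap.comp_apply, LinearMap.proj_apply]
    exact Finset.sum_congr rfl fun l _ => mul_comm _ _
  -- 2x2 minors of the image of `P∨` vanish (rank one!)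
  have minors : ∀ (f f' : P →ₗ[A] A) (x y : P), f x * f' y = f y * f' x := by
    intro f f' x y
    rw [← sub_eq_zero]
    apply eq_zero_of_localization
    intro J hJ
    haveI := hJ.isPrime
    obtain ⟨h⟩ := hrank J
    show algebraMap A (Localization J.primeCompl) (f x * f' y - f y * f' x) = 0
    set S := J.primeCompl with hS
    let mkP := LocalizedModule.mkLinearMap S P
    let loc : (P →ₗ[A] A) → (LocalizedModule S P →ₗ[Localization S] Localization S) :=
      fun φ => LinearMap.extendScalarsOfIsLocalization S (Localization S)
        (IsLocalizedModule.map S mkP (Algebra.linearMap A (Localization S)) φ)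
    have hloc : ∀ (φ : P →ₗ[A] A) (z : P),
        loc φ (mkP z) = algebraMap A (Localization S) (φ z) := by
      intro φ z
      simp only [loc, LinearMap.extendScalarsOfIsLocalization_apply']
      exact IsLocalizedModule.map_apply S mkP (Algebra.linearMap A (Localization S)) φ z
    have key : ∀ z : P, mkP z = h (mkP z) • h.symm 1 := by
      intro z
      conv_lhs => rw [← h.symm_apply_apply (mkP z)]
      rw [← map_smul, smul_eq_mul, mul_one]
    have hval : ∀ (φ : P →ₗ[A] A) (z : P),
        algebraMap A (Localization S) (φ z) = h (mkP z) * loc φ (h.symm 1) := by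
      intro φ z
      rw [← hloc]
      conv_lhs => rw [key z]
      rw [map_smul, smul_eq_mul]
    rw [map_sub, _root_.map_mul, _root_.map_mul, hval f x, hval f' y, hval f y, hval f' x]
    ring
  -- the swap identity in `P∨` (rank one!)
  have hb : ∀ (r : Module.Dual A P) (j : Fin (n + 2)),
      β r j = ∑ l, r (ρ (Pi.single l 1)) * β (g l) j := by
    intro r j
    conv_lhs => rw [hexp r]
    rw [map_sum, Finset.sum_apply]
    exact Finset.sum_congr rfl fun l _ => by rw [map_smul]; simp [smul_eq_mul]
  have hswap : ∀ (p q : Module.Dual A P) (j : Fin (n + 2)), β p j • q = β q j • p := by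
    intro p q j
    ext x
    simp only [LinearMap.smul_apply, smul_eq_mul]
    rw [hb p j, hb q j, Finset.sum_mul, Finset.sum_mul]
    refine Finset.sum_congr rfl fun l _ => ?_
    calc p (ρ (Pi.single l 1)) * β (g l) j * (q x)
        = β (g l) j * (p (ρ (Pi.single l 1)) * q x) := by ring
      _ = β (g l) j * (p x * q (ρ (Pi.single l 1))) := by
          rw [minors p q (ρ (Pi.single l 1)) x]
      _ = q (ρ (Pi.single l 1)) * β (g l) j * (p x) := by ring
  -- trace identity
  have htr : ∑ i, β (g i) i = 0 := by
    have h1 : ∀ i l, g i (ρ (Pi.single l 1)) = α (ρ (Pi.single l 1)) i := fun i l => rfl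
    calc ∑ i, β (g i) i = ∑ i, ∑ l, α (ρ (Pi.single l 1)) i * β (g l) i := by
          refine Finset.sum_congr rfl fun i _ => ?_
          rw [hb (g i) i]
          exact Finset.sum_congr rfl fun l _ => by rw [h1]
      _ = ∑ l, ∑ i, β (g l) i * α (ρ (Pi.single l 1)) i := by
          rw [Finset.sum_comm]
          exact Finset.sum_congr rfl fun l _ => Finset.sum_congr rfl fun i _ => mul_comm _ _
      _ = 0 := by
          refine Finset.sum_eq_zero fun l _ => hβ (g l) (ρ (Pi.single l 1))
  -- collapsed raising/lowering maps for basis vectors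
  have hraise' : ∀ (i : Fin (n + 2)) (k : Fin (n + 1)) (u : Fin k.val → Module.Dual A P),
      raise (Pi.single i 1) k (mkSym A u) = mkSym A (Fin.cons (g i) u) := by
    intro i k u
    rw [hraise]
    congr 1
    have : (∑ l, algebraMap ℂ A ((Pi.single i 1 : Fin (n+2) → ℂ) l) • ((LinearMap.proj l).comp α)) = g i := by
      rw [show g i = (LinearMap.proj i).comp α from rfl]
      simp [Pi.single_apply, apply_ite (algebraMap ℂ A), ite_smul]
    rw [this]
  have hlower' : ∀ (j : Fin (n + 2)) (k : Fin (n + 1)) (u : Fin (k.val + 1) → Module.Dual A P),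
      lower (Pi.single j 1) k (mkSym A u) = β (u 0) j • mkSym A (u ∘ Fin.succ) := by
    intro j k u
    rw [hlower]
    congr 1
    simp [Pi.single_apply, apply_ite (algebraMap ℂ A), ite_mul]
  refine ⟨?_, ?_, ?_, ?_⟩
  · -- raising maps commute
    intro c c' k
    refine symPow_hom_ext fun u => ?_
    simp only [LinearMap.comp_apply]
    calc raise c' k.succ (raise c k.castSucc (mkSym A u))
        = raise c' k.succ (mkSym A
            (Fin.cons (∑ i, algebraMap ℂ A (c i) • ((LinearMap.proj i).comp α)) u)) := by
          rw [hraise c k.castSucc u]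
      _ = mkSym A (Fin.cons (∑ i, algebraMap ℂ A (c' i) • ((LinearMap.proj i).comp α))
            (Fin.cons (∑ i, algebraMap ℂ A (c i) • ((LinearMap.proj i).comp α)) u)) :=
          hraise c' k.succ _
      _ = mkSym A (Fin.cons (∑ i, algebraMap ℂ A (c i) • ((LinearMap.proj i).comp α))
            (Fin.cons (∑ i, algebraMap ℂ A (c' i) • ((LinearMap.proj i).comp α)) u)) :=
          mkSym_cons_cons_swap _ _ _
      _ = raise c k.succ (mkSym A
            (Fin.cons (∑ i, algebraMap ℂ A (c' i) • ((LinearMap.proj i).comp α)) u)) :=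
          (hraise c k.succ _).symm
      _ = raise c k.succ (raise c' k.castSucc (mkSym A u)) := by
          rw [hraise c' k.castSucc u]
  · -- lowering maps commute
    intro c c' k
    have lowlow : ∀ (d d' : Fin (n + 2) → ℂ) (a b : Module.Dual A P)
        (w : Fin k.val → Module.Dual A P),
        lower d' k.castSucc (lower d k.succ (mkSym A (Fin.cons a (Fin.cons b w)))) =
          ((∑ j, algebraMap ℂ A (d j) * β a j) * (∑ j, algebraMap ℂ A (d' j) * β b j)) •
            mkSym A w := by
      intro d d' a b w
      rw [hlower d k.succ (Fin.cons a (Fin.cons b w))]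
      simp only [Fin.cons_zero, cons_comp_succ]
      rw [map_smul]
      have h2 : lower d' k.castSucc
            (mkSym A (Fin.cons b w) : SymPow A (Module.Dual A P) ((Fin.succ k).val)) =
          (∑ j, algebraMap ℂ A (d' j) * β b j) • mkSym A w := by
        have H := hlower d' k.castSucc (Fin.cons b w)
        simp only [Fin.cons_zero, cons_comp_succ] at H
        exact H
      rw [h2, smul_smul]
    refine symPow_hom_ext fun u => ?_
    simp only [LinearMap.comp_apply]
    have efun : u = Fin.cons (u 0)
        (Fin.cons (Fin.tail u (0 : Fin (k.val + 1)))
          (Fin.tail (Fin.tail u))) := by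
      funext i
      refine Fin.cases rfl (fun j => ?_) i
      refine Fin.cases rfl (fun m => ?_) j
      rfl
    rw [efun]
    have hsw : (mkSym A (Fin.cons (u 0)
          (Fin.cons (Fin.tail u (0 : Fin (k.val + 1)))
            (Fin.tail (Fin.tail u)))) :
          SymPow A (Module.Dual A P) ((Fin.succ k).val + 1)) =
        mkSym A (Fin.cons (Fin.tail u (0 : Fin (k.val + 1)))
          (Fin.cons (u 0) (Fin.tail (Fin.tail u)))) :=
      mkSym_cons_cons_swap _ _ _
    conv_rhs => rw [hsw]
    have L1 := lowlow c c' (u 0) (Fin.tail u (0 : Fin (k.val + 1))) (Fin.tail (Fin.tail u))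
    have L2 := lowlow c' c (Fin.tail u (0 : Fin (k.val + 1))) (u 0) (Fin.tail (Fin.tail u))
    refine L1.trans (Eq.trans ?_ L2.symm)
    rw [mul_comm]
  · -- composites are scalars
    intro i j k
    constructor
    · refine symPow_hom_ext fun u => ?_
      simp only [LinearMap.comp_apply, LinearMap.smul_apply, LinearMap.id_apply]
      rw [← Fin.cons_self_tail u]
      rw [hlower' j k (Fin.cons (u 0) (Fin.tail u))]
      simp only [Fin.cons_zero, cons_comp_succ]
      rw [map_smul, hraise' i k (Fin.tail u), ← mkSym_cons_smul, hswap (u 0) (g i) j,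
        mkSym_cons_smul]
    · refine symPow_hom_ext fun u => ?_
      simp only [LinearMap.comp_apply, LinearMap.smul_apply, LinearMap.id_apply]
      rw [hraise' i k u]
      rw [hlower' j k (Fin.cons (g i) u)]
      simp only [Fin.cons_zero, cons_comp_succ]
      rfl
  · -- the sums vanish
    intro k
    have e1 : ∀ i : Fin (n + 2),
        (raise (Pi.single i 1) k).comp (lower (Pi.single i 1) k) =
          β (g i) i • LinearMap.id := by
      intro i
      refine symPow_hom_ext fun u => ?_
      simp only [LinearMap.comp_apply, LinearMap.smul_apply, LinearMap.id_apply]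
      rw [← Fin.cons_self_tail u]
      rw [hlower' i k (Fin.cons (u 0) (Fin.tail u))]
      simp only [Fin.cons_zero, cons_comp_succ]
      rw [map_smul, hraise' i k (Fin.tail u), ← mkSym_cons_smul, hswap (u 0) (g i) i,
        mkSym_cons_smul]
    have e2 : ∀ i : Fin (n + 2),
        (lower (Pi.single i 1) k).comp (raise (Pi.single i 1) k) =
          β (g i) i • LinearMap.id := by
      intro i
      refine symPow_hom_ext fun u => ?_
      simp only [LinearMap.comp_apply, LinearMap.smul_apply, LinearMap.id_apply]
      rw [hraise' i k u, hlower' i k (Fin.cons (g i) u)]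
      simp only [Fin.cons_zero, cons_comp_succ]
    constructor
    · rw [Finset.sum_congr rfl fun i _ => e1 i, ← Finset.sum_smul, htr, zero_smul]
    · rw [Finset.sum_congr rfl fun i _ => e2 i, ← Finset.sum_smul, htr, zero_smul]
end

section
/- Let N ≥ 2, V = ℂ^N, and let W be a representation of the double Beilinson quiver with relations over ℂ in which each W_k is one-dimensional, W₀ = ℂ, and W is generated by W₀. Then W is simple (i.e., its only subrepresentations are 0 and W) if and only if W is generated by its last component W_{N−1}, i.e., the smallest subrepresentation of W containing W_{N−1} is W itself. -/
/-- `N = n + 2 ≥ 2`, `V = ℂ^N`.  Let `W` be a representation of the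
double Beilinson quiver with relations over `ℂ` (raising maps for `f ∈ V^*`, lowering maps
for `v ∈ V`, `ℂ`-linear in `f` resp. `v`, satisfying the commutation, mixed and
`∑ fᵢvᵢ = 0 = ∑ vᵢfᵢ` relations) in which each `W_k` is one-dimensional, `W₀ = ℂ` and `W`
is generated by `W₀`.  Then `W` is simple (every stable family of subspaces is `0` or all
of `W`) if and only if `W` is generated by its last component `W_{N−1}` (every stable family
of subspaces which is everything in the last slot is all of `W`). -/
theorem simple_iff_generated_by_last_component
    (n : ℕ)
    (W : Fin (n + 2) → Type*) [∀ k, AddCommGroup (W k)] [∀ k, Module ℂ (W k)]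
    (raise : (Fin (n + 2) → ℂ) → ∀ k : Fin (n + 1), W k.castSucc →ₗ[ℂ] W k.succ)
    (lower : (Fin (n + 2) → ℂ) → ∀ k : Fin (n + 1), W k.succ →ₗ[ℂ] W k.castSucc)
    (raise_add : ∀ c c' k, raise (c + c') k = raise c k + raise c' k)
    (raise_smul : ∀ (t : ℂ) c k, raise (t • c) k = t • raise c k)
    (lower_add : ∀ c c' k, lower (c + c') k = lower c k + lower c' k)
    (lower_smul : ∀ (t : ℂ) c k, lower (t • c) k = t • lower c k)
    (raise_comm : ∀ c c' (k : Fin n),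
      (raise c' k.succ).comp (raise c k.castSucc) = (raise c k.succ).comp (raise c' k.castSucc))
    (lower_comm : ∀ c c' (k : Fin n),
      (lower c' k.castSucc).comp (lower c k.succ) = (lower c k.castSucc).comp (lower c' k.succ))
    (mixed_comm : ∀ c c' (k : Fin n),
      (raise c k.castSucc).comp (lower c' k.castSucc) = (lower c' k.succ).comp (raise c k.succ))
    (sum_fv : ∀ k : Fin (n + 1),
      ∑ i, (raise (Pi.single i 1) k).comp (lower (Pi.single i 1) k) = 0)
    (sum_vf : ∀ k : Fin (n + 1),
      ∑ i, (lower (Pi.single i 1) k).comp (raise (Pi.single i 1) k) = 0)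
    (hdim : ∀ k, Module.finrank ℂ (W k) = 1)
    (hW0 : Nonempty (W 0 ≃ₗ[ℂ] ℂ))
    (hgen : ∀ (W' : ∀ k : Fin (n + 2), Submodule ℂ (W k)),
      (∀ (c : Fin (n + 2) → ℂ) (k : Fin (n + 1)),
        (W' k.castSucc).map (raise c k) ≤ W' k.succ ∧
        (W' k.succ).map (lower c k) ≤ W' k.castSucc) →
      W' 0 = ⊤ → ∀ k, W' k = ⊤) :
    -- `W` is simple …
    (∀ (W' : ∀ k : Fin (n + 2), Submodule ℂ (W k)),
      (∀ (c : Fin (n + 2) → ℂ) (k : Fin (n + 1)),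
        (W' k.castSucc).map (raise c k) ≤ W' k.succ ∧
        (W' k.succ).map (lower c k) ≤ W' k.castSucc) →
      (∀ k, W' k = ⊥) ∨ (∀ k, W' k = ⊤)) ↔
    -- … iff `W` is generated by its last component `W_{N−1}`
    (∀ (W' : ∀ k : Fin (n + 2), Submodule ℂ (W k)),
      (∀ (c : Fin (n + 2) → ℂ) (k : Fin (n + 1)),
        (W' k.castSucc).map (raise c k) ≤ W' k.succ ∧
        (W' k.succ).map (lower c k) ≤ W' k.castSucc) →
      W' (Fin.last (n + 1)) = ⊤ → ∀ k, W' k = ⊤) := by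
  have hfd : ∀ k, FiniteDimensional ℂ (W k) := fun k =>
    FiniteDimensional.of_finrank_pos (by rw [hdim k]; norm_num)
  have hne : ∀ k, (⊥ : Submodule ℂ (W k)) ≠ ⊤ := by
    intro k h
    have h0 : Module.finrank ℂ (⊥ : Submodule ℂ (W k)) = 0 := finrank_bot ℂ (W k)
    rw [h, finrank_top, hdim k] at h0
    exact one_ne_zero h0
  have hbt : ∀ k (p : Submodule ℂ (W k)), p = ⊥ ∨ p = ⊤ := by
    intro k p
    have hle : Module.finrank ℂ p ≤ 1 := by
      rw [← hdim k]; exact Submodule.finrank_le p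
    interval_cases h : Module.finrank ℂ p
    · left; exact Submodule.finrank_eq_zero.mp h
    · right; exact Submodule.eq_top_of_finrank_eq (by rw [h, hdim k])
  constructor
  · intro hsimp W' hstab hlast
    rcases hsimp W' hstab with h | h
    · exact absurd (h (Fin.last (n + 1)) ▸ hlast) (hne _)
    · exact h
  · intro hlastgen W' hstab
    rcases hbt _ (W' (Fin.last (n + 1))) with hb | ht
    · left
      -- key step: no level can have W' = ⊤ below and ⊥ above
      have key : ∀ j : Fin (n + 1), W' j.succ = ⊥ → W' j.castSucc = ⊥ := by
        intro j hsucc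
        rcases hbt _ (W' j.castSucc) with h | h
        · exact h
        exfalso
        -- all raising maps at level j vanish
        have hz : ∀ c, raise c j = 0 := by
          intro c
          have := (hstab c j).1
          rw [h, hsucc, Submodule.map_top, le_bot_iff] at this
          exact LinearMap.range_eq_bot.mp this
        -- define the truncated family
        set W'' : ∀ k : Fin (n + 2), Submodule ℂ (W k) :=
          fun k => if (k : ℕ) ≤ (j : ℕ) then ⊤ else ⊥ with hW''
        have hstab'' : ∀ (c : Fin (n + 2) → ℂ) (m : Fin (n + 1)),
            (W'' m.castSucc).map (raise c m) ≤ W'' m.succ ∧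
            (W'' m.succ).map (lower c m) ≤ W'' m.castSucc := by
          intro c m
          constructor
          · by_cases h1 : (m : ℕ) + 1 ≤ (j : ℕ)
            · have : W'' m.succ = ⊤ := by
                simp [hW'', Fin.val_succ, h1]
              rw [this]; exact le_top
            · by_cases h2 : (m : ℕ) ≤ (j : ℕ)
              · -- m = j
                have hmj : m = j := Fin.ext (Nat.le_antisymm h2 (by omega))
                subst hmj
                rw [hz c, Submodule.map_zero]
                exact bot_le
              · have : W'' m.castSucc = ⊥ := by
                  simp [hW'', Fin.coe_castSucc, h2]
                rw [this, Submodule.map_bot]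
                exact bot_le
          · by_cases h1 : (m : ℕ) + 1 ≤ (j : ℕ)
            · have : W'' m.castSucc = ⊤ := by
                simp [hW'', Fin.coe_castSucc]; omega
              rw [this]; exact le_top
            · have : W'' m.succ = ⊥ := by
                simp [hW'', Fin.val_succ, h1]
              rw [this, Submodule.map_bot]
              exact bot_le
        have h0 : W'' 0 = ⊤ := by simp [hW'']
        have := hgen W'' hstab'' h0 (Fin.last (n + 1))
        have hlt : ¬ ((Fin.last (n + 1) : Fin (n + 2)) : ℕ) ≤ (j : ℕ) := by
          have := j.isLt
          simp only [Fin.val_last]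
          omega
        rw [hW''] at this
        simp only [hlt, if_false] at this
        exact hne _ this
      intro k
      induction k using Fin.reverseInduction with
      | last => exact hb
      | cast j ih => exact key j ih
    · right
      exact hlastgen W' hstab ht
end

section
/- Let N ≥ 2, V = ℂ^N, and let W be a representation of the double Beilinson quiver with relations over ℂ in which each W_k is one-dimensional, W₀ = ℂ, and W is generated by W₀. Then every nonzero subrepresentation W' of W satisfies W'_{N−1} = W_{N−1}; that is, if some component W'_k of W' is nonzero, then the last component of W' equals the last component of W. -/

lemma aux_sub_eq_top {M : Type*} [AddCommGroup M] [Module ℂ M]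
    (h : Module.finrank ℂ M = 1) (p : Submodule ℂ M) (hp : p ≠ ⊥) : p = ⊤ := by
  have : FiniteDimensional ℂ M := Module.finite_of_finrank_eq_succ h
  apply Submodule.eq_top_of_finrank_eq
  have h1 : Module.finrank ℂ p ≤ 1 := h ▸ Submodule.finrank_le p
  have h2 : 0 < Module.finrank ℂ p := Module.finrank_pos_iff.mpr (Submodule.nontrivial_iff_ne_bot.mpr hp)
  omega

/-- `N = n + 2 ≥ 2`, `V = ℂ^N`.  Let `W` be a representation of the
double Beilinson quiver with relations over `ℂ` (raising maps for `f ∈ V^*`, lowering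
maps for `v ∈ V`, `ℂ`-linear in `f` resp. `v`, satisfying the commutation, mixed and
`∑ fᵢvᵢ = 0 = ∑ vᵢfᵢ` relations) in which each `W_k` is one-dimensional, `W₀ = ℂ` and `W`
is generated by `W₀`.  Then every nonzero subrepresentation `W'` of `W` satisfies
`W'_{N−1} = W_{N−1}`: if some component of `W'` is nonzero then its last component is all
of `W_{N−1}`. -/
theorem nonzero_subrep_has_full_last_component
    (n : ℕ)
    (W : Fin (n + 2) → Type*) [∀ k, AddCommGroup (W k)] [∀ k, Module ℂ (W k)]
    (raise : (Fin (n + 2) → ℂ) → ∀ k : Fin (n + 1), W k.castSucc →ₗ[ℂ] W k.succ)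
    (lower : (Fin (n + 2) → ℂ) → ∀ k : Fin (n + 1), W k.succ →ₗ[ℂ] W k.castSucc)
    (raise_add : ∀ c c' k, raise (c + c') k = raise c k + raise c' k)
    (raise_smul : ∀ (t : ℂ) c k, raise (t • c) k = t • raise c k)
    (lower_add : ∀ c c' k, lower (c + c') k = lower c k + lower c' k)
    (lower_smul : ∀ (t : ℂ) c k, lower (t • c) k = t • lower c k)
    (raise_comm : ∀ c c' (k : Fin n),
      (raise c' k.succ).comp (raise c k.castSucc) = (raise c k.succ).comp (raise c' k.castSucc))
    (lower_comm : ∀ c c' (k : Fin n),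
      (lower c' k.castSucc).comp (lower c k.succ) = (lower c k.castSucc).comp (lower c' k.succ))
    (mixed_comm : ∀ c c' (k : Fin n),
      (raise c k.castSucc).comp (lower c' k.castSucc) = (lower c' k.succ).comp (raise c k.succ))
    (sum_fv : ∀ k : Fin (n + 1),
      ∑ i, (raise (Pi.single i 1) k).comp (lower (Pi.single i 1) k) = 0)
    (sum_vf : ∀ k : Fin (n + 1),
      ∑ i, (lower (Pi.single i 1) k).comp (raise (Pi.single i 1) k) = 0)
    (hdim : ∀ k, Module.finrank ℂ (W k) = 1)
    (hW0 : Nonempty (W 0 ≃ₗ[ℂ] ℂ))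
    (hgen : ∀ (W' : ∀ k : Fin (n + 2), Submodule ℂ (W k)),
      (∀ (c : Fin (n + 2) → ℂ) (k : Fin (n + 1)),
        (W' k.castSucc).map (raise c k) ≤ W' k.succ ∧
        (W' k.succ).map (lower c k) ≤ W' k.castSucc) →
      W' 0 = ⊤ → ∀ k, W' k = ⊤) :
    ∀ (W' : ∀ k : Fin (n + 2), Submodule ℂ (W k)),
      (∀ (c : Fin (n + 2) → ℂ) (k : Fin (n + 1)),
        (W' k.castSucc).map (raise c k) ≤ W' k.succ ∧
        (W' k.succ).map (lower c k) ≤ W' k.castSucc) →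
      (∃ k, W' k ≠ ⊥) → W' (Fin.last (n + 1)) = ⊤ := by
  intro W' hW' ⟨k0, hk0⟩
  have ntriv : ∀ k, Nontrivial (W k) := fun k =>
    Module.nontrivial_of_finrank_pos (R := ℂ) (by rw [hdim]; omega)
  -- every raise level has a nonzero (hence surjective) map
  have hsurj : ∀ m : Fin (n + 1), ∃ c, raise c m ≠ 0 := by
    intro m
    by_contra hall
    push_neg at hall
    set W'' : ∀ k : Fin (n + 2), Submodule ℂ (W k) :=
      fun k => if (k : ℕ) ≤ (m : ℕ) then ⊤ else ⊥ with hW''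
    have hcl : ∀ (c : Fin (n + 2) → ℂ) (j : Fin (n + 1)),
        (W'' j.castSucc).map (raise c j) ≤ W'' j.succ ∧
        (W'' j.succ).map (lower c j) ≤ W'' j.castSucc := by
      intro c j
      constructor
      · by_cases h1 : (j : ℕ) + 1 ≤ (m : ℕ)
        · simp [hW'', Fin.val_succ, h1]
        · by_cases h2 : (j : ℕ) ≤ (m : ℕ)
          · have hjm : j = m := by
              apply Fin.ext; omega
            subst hjm
            simp [hW'', Fin.val_succ, h1, hall c, Submodule.map_zero]
          · simp [hW'', Fin.coe_castSucc, h2, Submodule.map_bot]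
      · by_cases h2 : (j : ℕ) ≤ (m : ℕ)
        · simp [hW'', Fin.coe_castSucc, h2]
        · have h1 : ¬ ((j : ℕ) + 1 ≤ (m : ℕ)) := by omega
          simp [hW'', Fin.val_succ, h1, Submodule.map_bot, Fin.coe_castSucc, h2]
    have h0 : W'' 0 = ⊤ := by simp [hW'']
    have := hgen W'' hcl h0 m.succ
    rw [hW''] at this
    simp only [Fin.val_succ] at this
    rw [if_neg (by omega)] at this
    exact absurd this (by
      have := ntriv m.succ
      simp)
  -- step lemma
  have hstep : ∀ m : Fin (n + 1), W' m.castSucc = ⊤ → W' m.succ = ⊤ := by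
    intro m hm
    obtain ⟨c, hc⟩ := hsurj m
    have hrange : LinearMap.range (raise c m) = ⊤ := by
      apply aux_sub_eq_top (hdim m.succ)
      rwa [Ne, LinearMap.range_eq_bot]
    have : (W' m.castSucc).map (raise c m) ≤ W' m.succ := (hW' c m).1
    rw [hm, Submodule.map_top, hrange] at this
    exact top_le_iff.mp this
  -- W' k0 = ⊤
  have hk0top : W' k0 = ⊤ := aux_sub_eq_top (hdim k0) _ hk0
  -- climb to the top
  have climb : ∀ d : ℕ, ∀ k : Fin (n + 2), (k : ℕ) + d = n + 1 → W' k = ⊤ →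
      W' (Fin.last (n + 1)) = ⊤ := by
    intro d
    induction d with
    | zero =>
      intro k hk htop
      have : k = Fin.last (n + 1) := Fin.ext (by simp [Fin.val_last]; omega)
      rwa [this] at htop
    | succ d ih =>
      intro k hk htop
      have hklt : (k : ℕ) < n + 1 := by omega
      set m : Fin (n + 1) := ⟨(k : ℕ), hklt⟩ with hm
      have hcast : m.castSucc = k := Fin.ext (by simp [hm])
      have := hstep m (by rwa [hcast])
      exact ih m.succ (by simp [Fin.val_succ, hm]; omega) this
  exact climb (n + 1 - (k0 : ℕ)) k0 (by omega) hk0top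
end

section
/- Let N ≥ 2, V = ℂ^N, let P be a one-dimensional ℂ-vector space, α : P → V an injective linear map, and β : P^∨ → V* a linear map with α^∨ ∘ β = 0, and let W_{αβ} be the associated representation of the double Beilinson quiver with relations over ℂ, with (W_{αβ})_k = Sym^k P^∨. Then W_{αβ} is simple (i.e., its only subrepresentations are 0 and W_{αβ}) if and only if β is injective (equivalently, since P^∨ is one-dimensional, if and only if β ≠ 0). -/
open PiTensorProduct

/-- A module spanned by a single nonzero vector has only the trivial submodules. -/
lemma aux_sub_bot_or_top {M : Type*} [AddCommGroup M] [Module ℂ M]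
    (e : M) (he : e ≠ 0) (hspan : ∀ w : M, ∃ c : ℂ, c • e = w)
    (W : Submodule ℂ M) : W = ⊥ ∨ W = ⊤ := by
  by_cases h : W = ⊥
  · exact Or.inl h
  · right
    obtain ⟨x, hxW, hx0⟩ := Submodule.exists_mem_ne_zero_of_ne_bot h
    obtain ⟨c, hc⟩ := hspan x
    have hc0 : c ≠ 0 := by
      rintro rfl
      rw [zero_smul] at hc
      exact hx0 hc.symm
    have heW : e ∈ W := by
      have h2 : c⁻¹ • x ∈ W := W.smul_mem _ hxW
      rwa [← hc, smul_smul, inv_mul_cancel₀ hc0, one_smul] at h2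
    rw [eq_top_iff]
    intro w _
    obtain ⟨d, hd⟩ := hspan w
    rw [← hd]
    exact W.smul_mem _ heW

/-- Discrete connectedness: a predicate constant on adjacent pairs is constant. -/
lemma aux_fin_const {m : ℕ} (g : Fin (m + 1) → Prop)
    (h : ∀ k : Fin m, g k.castSucc ↔ g k.succ) {i j : Fin (m + 1)} (hi : g i) : g j := by
  have h0 : ∀ i : Fin (m + 1), g i ↔ g 0 := by
    intro i
    induction i using Fin.induction with
    | zero => exact Iff.rfl
    | succ i ih => exact (h i).symm.trans ih
  exact (h0 j).mpr ((h0 i).mp hi)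

set_option maxHeartbeats 1600000 in
/-- `N = n + 2 ≥ 2`, `V = ℂ^N` with standard basis `v₁,…,v_N` and dual
basis `f₁,…,f_N`; `P` is a one-dimensional `ℂ`-vector space, `α : P → V` is an injective
linear map and `β : P^∨ → V^*` (in coordinates: `β u j = β(u)(vⱼ) = u(β^∨ vⱼ)`) satisfies
`α^∨ ∘ β = 0`.  `W_{αβ}` is the representation of the double Beilinson quiver with relations
on `(W_{αβ})_k = Sym^k P^∨`, where `f = ∑ cᵢfᵢ ∈ V^*` acts by `u¹⋯u^k ↦ α^∨(f)·u¹⋯u^k`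
(`α^∨(f) = ∑ cᵢ • (fᵢ ∘ α)`) and `v = ∑ cⱼvⱼ ∈ V` acts by
`u¹⋯u^k ↦ u¹(β^∨ v)·u²⋯u^k = (∑ cⱼ β(u¹)ⱼ)·u²⋯u^k`.  Then `W_{αβ}` is simple (its only
subrepresentations are `0` and itself) if and only if `β` is injective, equivalently
(as `P^∨` is one-dimensional) if and only if `β ≠ 0`. -/
theorem W_alpha_beta_simple_iff_beta_injective
    (n : ℕ)
    (P : Type*) [AddCommGroup P] [Module ℂ P] [FiniteDimensional ℂ P]
    (hP : Module.finrank ℂ P = 1)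
    (α : P →ₗ[ℂ] (Fin (n + 2) → ℂ)) (hα : Function.Injective α)
    (β : Module.Dual ℂ P →ₗ[ℂ] (Fin (n + 2) → ℂ))
    (hβ : ∀ (u : Module.Dual ℂ P) (p : P), ∑ i, β u i * α p i = 0)
    (raise : (Fin (n + 2) → ℂ) → ∀ k : Fin (n + 1),
      SymPow ℂ (Module.Dual ℂ P) k.val →ₗ[ℂ] SymPow ℂ (Module.Dual ℂ P) (k.val + 1))
    (hraise : ∀ (c : Fin (n + 2) → ℂ) (k : Fin (n + 1)) (u : Fin k.val → Module.Dual ℂ P),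
      raise c k (mkSym ℂ u) =
        mkSym ℂ (Fin.cons (∑ i, c i • ((LinearMap.proj i).comp α)) u))
    (lower : (Fin (n + 2) → ℂ) → ∀ k : Fin (n + 1),
      SymPow ℂ (Module.Dual ℂ P) (k.val + 1) →ₗ[ℂ] SymPow ℂ (Module.Dual ℂ P) k.val)
    (hlower : ∀ (c : Fin (n + 2) → ℂ) (k : Fin (n + 1))
        (u : Fin (k.val + 1) → Module.Dual ℂ P),
      lower c k (mkSym ℂ u) = (∑ j, c j * β (u 0) j) • mkSym ℂ (u ∘ Fin.succ)) :
    ((∀ (W' : ∀ k : Fin (n + 2), Submodule ℂ (SymPow ℂ (Module.Dual ℂ P) k.val)),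
        (∀ (c : Fin (n + 2) → ℂ) (k : Fin (n + 1)),
          (W' k.castSucc).map (raise c k) ≤ W' k.succ ∧
          (W' k.succ).map (lower c k) ≤ W' k.castSucc) →
        (∀ k, W' k = ⊥) ∨ (∀ k, W' k = ⊤)) ↔ Function.Injective β) ∧
    ((∀ (W' : ∀ k : Fin (n + 2), Submodule ℂ (SymPow ℂ (Module.Dual ℂ P) k.val)),
        (∀ (c : Fin (n + 2) → ℂ) (k : Fin (n + 1)),
          (W' k.castSucc).map (raise c k) ≤ W' k.succ ∧
          (W' k.succ).map (lower c k) ≤ W' k.castSucc) →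
        (∀ k, W' k = ⊥) ∨ (∀ k, W' k = ⊤)) ↔ β ≠ 0) := by
  classical
  -- `(Module.Dual ℂ P)` is one-dimensional: pick a spanning vector `e`
  have hQ1 : Module.finrank ℂ (Module.Dual ℂ P) = 1 := Subspace.dual_finrank_eq.trans hP
  obtain ⟨e, he, hspan⟩ := finrank_eq_one_iff'.mp hQ1
  -- the distinguished elements `E k = e ⋯ e ∈ Sym^k (Module.Dual ℂ P)`
  set E : ∀ k : ℕ, SymPow ℂ (Module.Dual ℂ P) k := fun k => mkSym ℂ (fun _ : Fin k => e) with hE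
  -- every `mkSym` is a multiple of `E k`
  have hsmul : ∀ (k : ℕ) (m : Fin k → (Module.Dual ℂ P)), ∃ c : ℂ,
      mkSym ℂ m = c • E k ∧ ((∀ i, m i ≠ 0) → c ≠ 0) := by
    intro k m
    choose d hd using fun i => hspan (m i)
    refine ⟨∏ i, d i, ?_, ?_⟩
    · have hm : m = fun i => d i • e := by funext i; rw [hd]
      calc mkSym ℂ m = (symRel ℂ (Module.Dual ℂ P) k).mkQ (PiTensorProduct.tprod ℂ m) := rfl
        _ = (symRel ℂ (Module.Dual ℂ P) k).mkQ ((∏ i, d i) • PiTensorProduct.tprod ℂ (fun _ => e)) := by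
            rw [hm, MultilinearMap.map_smul_univ (PiTensorProduct.tprod ℂ) d (fun _ => e)]
        _ = (∏ i, d i) • E k := by rw [map_smul]; rfl
    · intro hne
      rw [Finset.prod_ne_zero_iff]
      intro i _ hdi
      exact hne i (by rw [← hd i, hdi, zero_smul])
  -- `E k ≠ 0`
  have hE0 : ∀ k : ℕ, E k ≠ 0 := by
    intro k
    have hbij : Function.Bijective (LinearMap.toSpanSingleton ℂ (Module.Dual ℂ P) e) := by
      constructor
      · intro a b hab
        simp only [LinearMap.toSpanSingleton_apply] at hab
        have h2 : (a - b) • e = 0 := by rw [sub_smul, hab, sub_self]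
        rcases smul_eq_zero.mp h2 with h3 | h3
        · exact sub_eq_zero.mp h3
        · exact absurd h3 he
      · intro w
        obtain ⟨c, hc⟩ := hspan w
        exact ⟨c, by simpa [LinearMap.toSpanSingleton_apply] using hc⟩
    set φ := (LinearEquiv.ofBijective _ hbij).symm with hφ
    have hφe : φ e = 1 := by
      have h1 := (LinearEquiv.ofBijective _ hbij).symm_apply_apply 1
      have h2 : (LinearEquiv.ofBijective _ hbij) 1 = e := by
        simp [LinearEquiv.ofBijective_apply, LinearMap.toSpanSingleton_apply]
      rw [h2] at h1
      exact h1
    set L := PiTensorProduct.lift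
      ((MultilinearMap.mkPiAlgebra ℂ (Fin k) ℂ).compLinearMap
        (fun _ => (φ : (Module.Dual ℂ P) →ₗ[ℂ] ℂ))) with hLdef
    have hL : ∀ m : Fin k → (Module.Dual ℂ P), L (tprod ℂ m) = ∏ i, φ (m i) := by
      intro m
      simp [hLdef, MultilinearMap.compLinearMap_apply, MultilinearMap.mkPiAlgebra_apply]
    have hker : symRel ℂ (Module.Dual ℂ P) k ≤ LinearMap.ker L := by
      rw [symRel, Submodule.span_le]
      rintro x ⟨m, σ, rfl⟩
      simp only [SetLike.mem_coe, LinearMap.mem_ker, map_sub, hL]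
      rw [sub_eq_zero]
      calc (∏ i, φ (m i)) = ∏ i, φ (m (σ i)) := (Equiv.prod_comp σ (fun i => φ (m i))).symm
        _ = ∏ i, φ ((m ∘ σ) i) := rfl
    intro hEk
    have h1 := congrArg ((symRel ℂ (Module.Dual ℂ P) k).liftQ L hker) hEk
    rw [map_zero] at h1
    have h2 : (symRel ℂ (Module.Dual ℂ P) k).liftQ L hker (E k) = 1 := by
      show (symRel ℂ (Module.Dual ℂ P) k).liftQ L hker ((symRel ℂ (Module.Dual ℂ P) k).mkQ (tprod ℂ (fun _ : Fin k => e))) = 1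
      rw [Submodule.mkQ_apply, Submodule.liftQ_apply, hL]
      simp [hφe]
    rw [h2] at h1
    exact one_ne_zero h1
  -- `E k` spans `Sym^k (Module.Dual ℂ P)`
  have hspanE : ∀ (k : ℕ) (w : SymPow ℂ (Module.Dual ℂ P) k), ∃ c : ℂ, c • E k = w := by
    intro k w
    have htop : (⊤ : Submodule ℂ (SymPow ℂ (Module.Dual ℂ P) k)) ≤ Submodule.span ℂ {E k} := by
      rw [← Submodule.range_mkQ (symRel ℂ (Module.Dual ℂ P) k), LinearMap.range_eq_map,
        ← PiTensorProduct.span_tprod_eq_top, Submodule.map_span, Submodule.span_le]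
      rintro x ⟨y, ⟨m, rfl⟩, rfl⟩
      obtain ⟨c, hc, -⟩ := hsmul k m
      exact Submodule.mem_span_singleton.mpr ⟨c, hc.symm⟩
    exact Submodule.mem_span_singleton.mp (htop Submodule.mem_top)
  -- classification of submodules
  have hclass : ∀ (k : ℕ) (W : Submodule ℂ (SymPow ℂ (Module.Dual ℂ P) k)), W = ⊥ ∨ W = ⊤ :=
    fun k => aux_sub_bot_or_top (E k) (hE0 k) (hspanE k)
  have hbotne : ∀ k : ℕ, (⊥ : Submodule ℂ (SymPow ℂ (Module.Dual ℂ P) k)) ≠ ⊤ := by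
    intro k h
    exact hE0 k ((Submodule.mem_bot ℂ).mp (h ▸ Submodule.mem_top))
  -- `β e ≠ 0` when `β ≠ 0`
  have hbe : β ≠ 0 → β e ≠ 0 := by
    intro hb h0
    apply hb
    ext u i
    obtain ⟨c, hc⟩ := hspan u
    rw [← hc, map_smul, h0]
    simp
  -- injectivity iff nonzero
  have hinj : Function.Injective β ↔ β ≠ 0 := by
    constructor
    · intro h h0
      exact he (h (by rw [h0]; simp))
    · intro hb u u' huu
      obtain ⟨c, hc⟩ := hspan u
      obtain ⟨c', hc'⟩ := hspan u'
      rw [← hc, ← hc', map_smul, map_smul] at huu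
      have h2 : (c - c') • β e = 0 := by rw [sub_smul, huu, sub_self]
      rcases smul_eq_zero.mp h2 with h3 | h3
      · rw [← hc, ← hc', sub_eq_zero.mp h3]
      · exact absurd h3 (hbe hb)
  -- the key equivalence
  have key : (∀ (W' : ∀ k : Fin (n + 2), Submodule ℂ (SymPow ℂ (Module.Dual ℂ P) k.val)),
        (∀ (c : Fin (n + 2) → ℂ) (k : Fin (n + 1)),
          (W' k.castSucc).map (raise c k) ≤ W' k.succ ∧
          (W' k.succ).map (lower c k) ≤ W' k.castSucc) →
        (∀ k, W' k = ⊥) ∨ (∀ k, W' k = ⊤)) ↔ β ≠ 0 := by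
    constructor
    · -- simple → β ≠ 0
      intro hS
      by_contra hb0
      obtain ⟨W', hW'⟩ : ∃ W' : ∀ k : Fin (n + 2), Submodule ℂ (SymPow ℂ (Module.Dual ℂ P) k.val),
          ∀ k, W' k = if k.val = 0 then ⊥ else ⊤ := ⟨_, fun _ => rfl⟩
      have hhyp : ∀ (c : Fin (n + 2) → ℂ) (k : Fin (n + 1)),
          (W' k.castSucc).map (raise c k) ≤ W' k.succ ∧
          (W' k.succ).map (lower c k) ≤ W' k.castSucc := by
        intro c k
        constructor
        · have ht : W' k.succ = ⊤ := by
            rw [hW' k.succ, Fin.val_succ, if_neg (by omega : ¬ (k.val + 1 = 0))]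
          rw [ht]
          exact le_top
        · rintro x ⟨y, hy, rfl⟩
          obtain ⟨d, hd⟩ := hspanE (k.val + 1) y
          have h1 : lower c k (E (k.val + 1)) = 0 := by
            have h2 := hlower c k (fun _ : Fin (k.val + 1) => e)
            have h3 : (∑ j, c j * β e j) = 0 := by simp [hb0]
            rw [h3, zero_smul] at h2
            exact h2
          rw [← hd, map_smul]
          show d • (lower c k) (E (k.val + 1)) ∈ W' k.castSucc
          rw [h1, smul_zero]
          exact Submodule.zero_mem _
      rcases hS W' hhyp with h | h
      · have h1 := h ⟨1, by omega⟩
        rw [hW' ⟨1, by omega⟩] at h1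
        simp only [if_neg (by norm_num : ¬ (1 : ℕ) = 0)] at h1
        exact hbotne 1 h1.symm
      · have h1 := h ⟨0, by omega⟩
        rw [hW' ⟨0, by omega⟩] at h1
        simp only [if_pos rfl] at h1
        exact hbotne 0 h1
    · -- β ≠ 0 → simple
      intro hb W' hhyp
      by_contra hcon
      push_neg at hcon
      obtain ⟨⟨a, ha⟩, ⟨b, hbne⟩⟩ := hcon
      have haT : W' a = ⊤ := (hclass a.val (W' a)).resolve_left ha
      have hbB : W' b = ⊥ := (hclass b.val (W' b)).resolve_right hbne
      have hnotall : ¬ ∀ k : Fin (n + 1), (W' k.castSucc = ⊤ ↔ W' k.succ = ⊤) := by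
        intro hall
        have h2 : W' b = ⊤ := aux_fin_const (fun k => W' k = ⊤) hall haT
        rw [hbB] at h2
        exact hbotne b.val h2
      push_neg at hnotall
      obtain ⟨k, hk⟩ := hnotall
      rcases hclass _ (W' k.castSucc) with hcs | hcs <;>
        rcases hclass _ (W' k.succ) with hsc | hsc
      · rcases hk with ⟨h1, -⟩ | ⟨-, h2⟩
        · rw [hcs] at h1; exact hbotne _ h1
        · rw [hsc] at h2; exact hbotne _ h2
      · -- W' castSucc = ⊥, W' succ = ⊤ : use lower
        obtain ⟨j, hj⟩ := Function.ne_iff.mp (hbe hb)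
        set cv : Fin (n + 2) → ℂ := Pi.single j 1 with hcv
        have hsum : (∑ j', cv j' * β e j') = β e j := by
          rw [Finset.sum_eq_single j]
          · simp [hcv]
          · intro i _ hi
            simp [hcv, Pi.single_eq_of_ne hi]
          · simp
        have h1 := hlower cv k (fun _ : Fin (k.val + 1) => e)
        rw [hsum] at h1
        have hcomp : ((fun _ : Fin (k.val + 1) => e) ∘ Fin.succ) = fun _ : Fin k.val => e := rfl
        rw [hcomp] at h1
        have hmem : lower cv k (E (k.val + 1)) ∈ W' k.castSucc :=
          (hhyp cv k).2 ⟨E (k.val + 1), by rw [hsc]; exact Submodule.mem_top, rfl⟩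
        rw [hcs, Submodule.mem_bot] at hmem
        rw [h1] at hmem
        rcases smul_eq_zero.mp hmem with h3 | h3
        · exact hj (by simpa using h3)
        · exact hE0 k.val h3
      · -- W' castSucc = ⊤, W' succ = ⊥ : use raise
        obtain ⟨p, hp, -⟩ := finrank_eq_one_iff'.mp hP
        have hαp : α p ≠ 0 := fun h => hp (hα (by rw [h, map_zero]))
        obtain ⟨i, hi⟩ := Function.ne_iff.mp hαp
        set cv : Fin (n + 2) → ℂ := Pi.single i 1 with hcv
        set f : (Module.Dual ℂ P) := (LinearMap.proj i).comp α with hf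
        have hsum : (∑ i', cv i' • ((LinearMap.proj i').comp α)) = f := by
          rw [Finset.sum_eq_single i]
          · simp [hcv, hf]
          · intro i' _ hi'
            simp [hcv, Pi.single_eq_of_ne hi']
          · simp
        have hf0 : f ≠ 0 := by
          intro h
          apply hi
          have : f p = 0 := by rw [h]; rfl
          simpa [hf] using this
        have h1 := hraise cv k (fun _ : Fin k.val => e)
        rw [hsum] at h1
        obtain ⟨c, hc, hc0⟩ := hsmul (k.val + 1) (Fin.cons f (fun _ => e))
        have hcne : c ≠ 0 := by
          apply hc0
          intro i'
          refine Fin.cases ?_ ?_ i'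
          · simpa using hf0
          · intro j'
            simpa using he
        have hmem : raise cv k (E k.val) ∈ W' k.succ :=
          (hhyp cv k).1 ⟨E k.val, by rw [hcs]; exact Submodule.mem_top, rfl⟩
        rw [hsc, Submodule.mem_bot] at hmem
        rw [h1, hc] at hmem
        rcases smul_eq_zero.mp hmem with h3 | h3
        · exact hcne h3
        · exact hE0 (k.val + 1) h3
      · rcases hk with ⟨-, h2⟩ | ⟨h1, -⟩
        · exact h2 hsc
        · exact h1 hcs
  exact ⟨key.trans hinj.symm, key⟩
end

section
/- Let N ≥ 2, V = ℂ^N, let P be a one-dimensional ℂ-vector space, α : P → V an injective linear map, and β : P^∨ → V* a linear map with α^∨ ∘ β = 0, and set X := α ∘ β^∨ ∈ End_ℂ(V). Then X² = 0 and rank X ≤ 1; moreover rank X = 1 (equivalently X ≠ 0, equivalently X lies in B(1), the locus lying over the nonsingular part of the closure of B(1)) if and only if the associated representation W_{αβ} of the double Beilinson quiver with relations over ℂ is simple. -/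
open PiTensorProduct

/-- The map `β^∨ : V → P` dual to `β : P^∨ → V^*` (using that the finite-dimensional
space `P` is reflexive); it is characterized by `u (β^∨ x) = ∑ j, β u j * x j`. -/
noncomputable def betaVee (n : ℕ) (P : Type*) [AddCommGroup P] [Module ℂ P]
    [FiniteDimensional ℂ P] (β : Module.Dual ℂ P →ₗ[ℂ] (Fin (n + 2) → ℂ)) :
    (Fin (n + 2) → ℂ) →ₗ[ℂ] P :=
  (Module.evalEquiv ℂ P).symm.toLinearMap ∘ₗ β.dualMap ∘ₗ
    (Pi.basisFun ℂ (Fin (n + 2))).toDual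

section Aux

variable {M : Type*} [AddCommGroup M] [Module ℂ M]

/-- The functional on `Sym^k M` induced by a functional `φ` on `M`. -/
noncomputable def symFun (φ : M →ₗ[ℂ] ℂ) (k : ℕ) : SymPow ℂ M k →ₗ[ℂ] ℂ :=
  Submodule.liftQ _
    (PiTensorProduct.lift ((MultilinearMap.mkPiAlgebra ℂ (Fin k) ℂ).compLinearMap fun _ => φ))
    (by
      rw [symRel, Submodule.span_le]
      rintro x ⟨m, σ, rfl⟩
      simp only [SetLike.mem_coe, LinearMap.mem_ker, map_sub, PiTensorProduct.lift.tprod,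
        MultilinearMap.compLinearMap_apply, MultilinearMap.mkPiAlgebra_apply,
        Function.comp_apply]
      rw [sub_eq_zero]
      exact (Equiv.prod_comp σ fun i => φ (m i)).symm)

lemma symFun_mkSym (φ : M →ₗ[ℂ] ℂ) {k : ℕ} (m : Fin k → M) :
    symFun φ k (mkSym ℂ m) = ∏ i, φ (m i) := by
  simp [symFun, mkSym]

lemma mkSym_smul_univ {k : ℕ} (a : Fin k → ℂ) (m : Fin k → M) :
    mkSym ℂ (fun i => a i • m i) = (∏ i, a i) • mkSym ℂ m := by
  unfold mkSym
  rw [MultilinearMap.map_smul_univ, map_smul]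

lemma mkSym_cons_smul_s13 {k : ℕ} (t : ℂ) (x : M) (u : Fin k → M) :
    mkSym ℂ (Fin.cons (t • x) u) = t • mkSym ℂ (Fin.cons x u) := by
  unfold mkSym
  have h : (tprod ℂ : MultilinearMap ℂ (fun _ : Fin (k+1) => M) _)
        (Fin.cons (t • x) u)
      = t • (tprod ℂ : MultilinearMap ℂ (fun _ : Fin (k+1) => M) _) (Fin.cons x u) := by
    simp_rw [← Fin.update_cons_zero (α := fun _ : Fin (k+1) => M) x u (t • x),
      (tprod ℂ : MultilinearMap ℂ (fun _ : Fin (k+1) => M) _).map_update_smul,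
      Fin.update_cons_zero]
  rw [h, map_smul]

lemma mkSym_mem_span {k : ℕ} (e : M) (hrep : ∀ u : M, ∃ a : ℂ, u = a • e)
    (m : Fin k → M) : mkSym ℂ m ∈ Submodule.span ℂ {mkSym ℂ (fun _ : Fin k => e)} := by
  choose a ha using fun i => hrep (m i)
  have : m = fun i => a i • e := funext ha
  rw [this, mkSym_smul_univ]
  exact Submodule.smul_mem _ _ (Submodule.mem_span_singleton_self _)

lemma sym_span {k : ℕ} (e : M) (hrep : ∀ u : M, ∃ a : ℂ, u = a • e)
    (x : SymPow ℂ M k) : x ∈ Submodule.span ℂ {mkSym ℂ (fun _ : Fin k => e)} := by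
  obtain ⟨y, rfl⟩ := Submodule.mkQ_surjective (symRel ℂ M k) x
  induction y using PiTensorProduct.induction_on with
  | smul_tprod r m =>
      rw [map_smul]
      exact Submodule.smul_mem _ _ (mkSym_mem_span e hrep m)
  | add x y hx hy =>
      rw [map_add]; exact Submodule.add_mem _ hx hy

lemma sym_span_top {k : ℕ} (e : M) (hrep : ∀ u : M, ∃ a : ℂ, u = a • e) :
    Submodule.span ℂ {mkSym ℂ (fun _ : Fin k => e)} = (⊤ : Submodule ℂ (SymPow ℂ M k)) :=
  eq_top_iff.mpr fun x _ => sym_span e hrep x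

lemma submodule_bot_or_top {k : ℕ} (e : M) (hrep : ∀ u : M, ∃ a : ℂ, u = a • e)
    (W : Submodule ℂ (SymPow ℂ M k)) : W = ⊥ ∨ W = ⊤ := by
  by_cases h : W = ⊥
  · exact Or.inl h
  · right
    obtain ⟨x, hxW, hx⟩ := Submodule.exists_mem_ne_zero_of_ne_bot h
    obtain ⟨c, hc⟩ := Submodule.mem_span_singleton.mp (sym_span e hrep x)
    have hc0 : c ≠ 0 := by rintro rfl; simp at hc; exact hx hc.symm
    have hg : mkSym ℂ (fun _ : Fin k => e) ∈ W := by
      have : c⁻¹ • x = mkSym ℂ (fun _ : Fin k => e) := by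
        rw [← hc, smul_smul, inv_mul_cancel₀ hc0, one_smul]
      rw [← this]; exact Submodule.smul_mem _ _ hxW
    rw [eq_top_iff]
    intro y _
    obtain ⟨d, hd⟩ := Submodule.mem_span_singleton.mp (sym_span e hrep y)
    rw [← hd]; exact Submodule.smul_mem _ _ hg

lemma toDual_basisFun_apply {N : ℕ} (x w : Fin N → ℂ) :
    (Pi.basisFun ℂ (Fin N)).toDual x w = ∑ i, w i * x i := by
  conv_lhs => rw [← (Pi.basisFun ℂ (Fin N)).sum_repr w]
  rw [map_sum]
  simp only [map_smul, Module.Basis.toDual_apply_left, Pi.basisFun_repr, smul_eq_mul]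

lemma betaVee_apply' (n : ℕ) (P : Type*) [AddCommGroup P] [Module ℂ P]
    [FiniteDimensional ℂ P] (β : Module.Dual ℂ P →ₗ[ℂ] (Fin (n + 2) → ℂ))
    (u : Module.Dual ℂ P) (x : Fin (n + 2) → ℂ) :
    u (betaVee n P β x) = ∑ i, β u i * x i := by
  have h1 : u (betaVee n P β x)
      = (β.dualMap ((Pi.basisFun ℂ (Fin (n + 2))).toDual x)) u := by
    simp only [betaVee, LinearMap.comp_apply, LinearEquiv.coe_coe]
    exact Module.apply_evalEquiv_symm_apply ℂ P u _
  rw [h1, LinearMap.dualMap_apply, toDual_basisFun_apply]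

end Aux

set_option maxHeartbeats 1600000 in
/-- `N = n + 2 ≥ 2`, `V = ℂ^N`; `P` is a one-dimensional `ℂ`-vector
space, `α : P → V` injective linear, `β : P^∨ → V^*` linear with `α^∨ ∘ β = 0`, and
`X := α ∘ β^∨ ∈ End_ℂ(V)`.  Then `X² = 0` and `rank X ≤ 1`; moreover `rank X = 1`
(equivalently `X ≠ 0`, i.e. `X ∈ B(1)`) if and only if the representation `W_{αβ}` of the
double Beilinson quiver with relations (on `(W_{αβ})_k = Sym^k P^∨`, `f = ∑ cᵢfᵢ` acting by
`u¹⋯u^k ↦ α^∨(f)·u¹⋯u^k` and `v = ∑ cⱼvⱼ` acting by `u¹⋯u^k ↦ u¹(β^∨v)·u²⋯u^k`) is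
simple. -/
theorem X_in_B1_iff_W_alpha_beta_simple
    (n : ℕ)
    (P : Type*) [AddCommGroup P] [Module ℂ P] [FiniteDimensional ℂ P]
    (hP : Module.finrank ℂ P = 1)
    (α : P →ₗ[ℂ] (Fin (n + 2) → ℂ)) (hα : Function.Injective α)
    (β : Module.Dual ℂ P →ₗ[ℂ] (Fin (n + 2) → ℂ))
    (hβ : ∀ (u : Module.Dual ℂ P) (p : P), ∑ i, β u i * α p i = 0)
    (raise : (Fin (n + 2) → ℂ) → ∀ k : Fin (n + 1),
      SymPow ℂ (Module.Dual ℂ P) k.val →ₗ[ℂ] SymPow ℂ (Module.Dual ℂ P) (k.val + 1))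
    (hraise : ∀ (c : Fin (n + 2) → ℂ) (k : Fin (n + 1)) (u : Fin k.val → Module.Dual ℂ P),
      raise c k (mkSym ℂ u) =
        mkSym ℂ (Fin.cons (∑ i, c i • ((LinearMap.proj i).comp α)) u))
    (lower : (Fin (n + 2) → ℂ) → ∀ k : Fin (n + 1),
      SymPow ℂ (Module.Dual ℂ P) (k.val + 1) →ₗ[ℂ] SymPow ℂ (Module.Dual ℂ P) k.val)
    (hlower : ∀ (c : Fin (n + 2) → ℂ) (k : Fin (n + 1))
        (u : Fin (k.val + 1) → Module.Dual ℂ P),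
      lower c k (mkSym ℂ u) = (∑ j, c j * β (u 0) j) • mkSym ℂ (u ∘ Fin.succ)) :
    (α ∘ₗ betaVee n P β).comp (α ∘ₗ betaVee n P β) = 0 ∧
    LinearMap.rank (α ∘ₗ betaVee n P β) ≤ 1 ∧
    (LinearMap.rank (α ∘ₗ betaVee n P β) = 1 ↔
      (∀ (W' : ∀ k : Fin (n + 2), Submodule ℂ (SymPow ℂ (Module.Dual ℂ P) k.val)),
        (∀ (c : Fin (n + 2) → ℂ) (k : Fin (n + 1)),
          (W' k.castSucc).map (raise c k) ≤ W' k.succ ∧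
          (W' k.succ).map (lower c k) ≤ W' k.castSucc) →
        (∀ k, W' k = ⊥) ∨ (∀ k, W' k = ⊤))) ∧
    (α ∘ₗ betaVee n P β ≠ 0 ↔
      (∀ (W' : ∀ k : Fin (n + 2), Submodule ℂ (SymPow ℂ (Module.Dual ℂ P) k.val)),
        (∀ (c : Fin (n + 2) → ℂ) (k : Fin (n + 1)),
          (W' k.castSucc).map (raise c k) ≤ W' k.succ ∧
          (W' k.succ).map (lower c k) ≤ W' k.castSucc) →
        (∀ k, W' k = ⊥) ∨ (∀ k, W' k = ⊤))) := by
  classical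
  -- basic setup on the one-dimensional dual space
  have hDrank : Module.finrank ℂ (Module.Dual ℂ P) = 1 := by
    rw [Subspace.dual_finrank_eq, hP]
  let b : Module.Basis (Fin 1) ℂ (Module.Dual ℂ P) := Module.basisUnique (Fin 1) hDrank
  set e : Module.Dual ℂ P := b 0 with he
  have hrep : ∀ u : Module.Dual ℂ P, ∃ a : ℂ, u = a • e := fun u =>
    ⟨b.repr u 0, by
      conv_lhs => rw [← b.sum_repr u]
      rw [Fin.sum_univ_one]⟩
  set φ : Module.Dual ℂ P →ₗ[ℂ] ℂ := b.coord 0 with hφ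
  have hφe : φ e = 1 := by simp [hφ, he, b.repr_self]
  have hrepφ : ∀ u : Module.Dual ℂ P, u = φ u • e := by
    intro u
    obtain ⟨a, ha⟩ := hrep u
    rw [ha]
    simp [map_smul, hφe]
  -- the generator of each symmetric power and its nonvanishing
  have hgne : ∀ k : ℕ, mkSym ℂ (fun _ : Fin k => e) ≠ 0 := by
    intro k h
    have h1 : symFun φ k (mkSym ℂ (fun _ : Fin k => e)) = 1 := by
      rw [symFun_mkSym]; simp [hφe]
    rw [h, map_zero] at h1
    exact zero_ne_one h1
  -- X = 0 iff β e = 0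
  have hX0 : α ∘ₗ betaVee n P β = 0 ↔ β e = 0 := by
    constructor
    · intro h
      by_contra hne
      obtain ⟨j, hj⟩ := Function.ne_iff.mp hne
      have hj' : β e j ≠ 0 := hj
      have hx : e (betaVee n P β (Pi.single j 1 : Fin (n+2) → ℂ)) = β e j := by
        rw [betaVee_apply']
        simp [Pi.single_apply]
      have hb0 : betaVee n P β (Pi.single j 1 : Fin (n+2) → ℂ) ≠ 0 := by
        intro h0
        rw [h0, map_zero] at hx
        exact hj' hx.symm
      have h2 : α (betaVee n P β (Pi.single j 1 : Fin (n+2) → ℂ)) = 0 := by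
        have := LinearMap.ext_iff.mp h (Pi.single j 1 : Fin (n+2) → ℂ)
        simpa using this
      exact hb0 (hα (by simpa using h2))
    · intro h
      have hβ0 : ∀ u : Module.Dual ℂ P, β u = 0 := by
        intro u
        rw [hrepφ u, map_smul, h, smul_zero]
      refine LinearMap.ext fun x => ?_
      have h0 : betaVee n P β x = 0 := by
        rw [← Module.forall_dual_apply_eq_zero_iff ℂ]
        intro u
        rw [betaVee_apply', hβ0]
        simp
      simp [LinearMap.comp_apply, h0]
  -- X² = 0
  have hsq : (α ∘ₗ betaVee n P β).comp (α ∘ₗ betaVee n P β) = 0 := by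
    have hba : ∀ p : P, betaVee n P β (α p) = 0 := by
      intro p
      rw [← Module.forall_dual_apply_eq_zero_iff ℂ]
      intro u
      rw [betaVee_apply']
      exact hβ u p
    ext x j
    simp [LinearMap.comp_apply, hba]
  -- rank ≤ 1
  have hfr : Module.finrank ℂ ↥(LinearMap.range (α ∘ₗ betaVee n P β)) ≤ 1 := by
    calc Module.finrank ℂ ↥(LinearMap.range (α ∘ₗ betaVee n P β))
        ≤ Module.finrank ℂ ↥(LinearMap.range α) :=
          Submodule.finrank_mono (LinearMap.range_comp_le_range _ _)
      _ = Module.finrank ℂ P := LinearMap.finrank_range_of_inj hα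
      _ = 1 := hP
  have hrle : LinearMap.rank (α ∘ₗ betaVee n P β) ≤ 1 := by
    rw [LinearMap.rank, ← Module.finrank_eq_rank]
    exact_mod_cast hfr
  -- rank = 1 iff X ≠ 0
  have hrank_iff : LinearMap.rank (α ∘ₗ betaVee n P β) = 1 ↔ α ∘ₗ betaVee n P β ≠ 0 := by
    constructor
    · intro h1 h0
      rw [h0] at h1
      have : LinearMap.rank (0 : (Fin (n+2) → ℂ) →ₗ[ℂ] (Fin (n+2) → ℂ)) = 0 :=
        LinearMap.rank_zero
      rw [this] at h1
      exact zero_ne_one h1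
    · intro hne
      rcases lt_or_eq_of_le hrle with h | h
      · exfalso
        have h0 : LinearMap.rank (α ∘ₗ betaVee n P β) = 0 :=
          Cardinal.lt_one_iff_zero.mp h
        have : LinearMap.range (α ∘ₗ betaVee n P β) = ⊥ :=
          Submodule.rank_eq_zero.mp h0
        exact hne (LinearMap.range_eq_bot.mp this)
      · exact h
  -- simplicity iff β e ≠ 0
  have hsimple : (β e ≠ 0) ↔
      (∀ (W' : ∀ k : Fin (n + 2), Submodule ℂ (SymPow ℂ (Module.Dual ℂ P) k.val)),
        (∀ (c : Fin (n + 2) → ℂ) (k : Fin (n + 1)),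
          (W' k.castSucc).map (raise c k) ≤ W' k.succ ∧
          (W' k.succ).map (lower c k) ≤ W' k.castSucc) →
        (∀ k, W' k = ⊥) ∨ (∀ k, W' k = ⊤)) := by
    constructor
    · -- β e ≠ 0 implies simplicity
      intro hbe W' hW'
      obtain ⟨j₀, hj₀⟩ := Function.ne_iff.mp hbe
      -- a direction c making the raising map nonzero
      have hc_up : ∃ c : Fin (n + 2) → ℂ,
          φ (∑ i, c i • ((LinearMap.proj i).comp α)) ≠ 0 := by
        have : Nontrivial P := Module.nontrivial_of_finrank_pos (by rw [hP]; norm_num)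
        obtain ⟨p₀, hp₀⟩ := exists_ne (0 : P)
        have hαp : α p₀ ≠ 0 := fun h => hp₀ (hα (by simpa using h))
        obtain ⟨i₀, hi₀⟩ := Function.ne_iff.mp hαp
        refine ⟨(Pi.single i₀ 1 : Fin (n+2) → ℂ), fun h => ?_⟩
        have hA : (∑ i, (Pi.single i₀ 1 : Fin (n+2) → ℂ) i • ((LinearMap.proj i).comp α)) p₀
            = α p₀ i₀ := by
          simp [LinearMap.sum_apply, Pi.single_apply]
        have h0 : (∑ i, (Pi.single i₀ 1 : Fin (n+2) → ℂ) i • ((LinearMap.proj i).comp α))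
            = 0 := by
          rw [hrepφ (∑ i, (Pi.single i₀ 1 : Fin (n+2) → ℂ) i • ((LinearMap.proj i).comp α)),
            h, zero_smul]
        rw [h0] at hA
        exact hi₀ (by simpa using hA.symm)
      have hbt : ∀ k : Fin (n + 2), W' k = ⊥ ∨ W' k = ⊤ := fun k =>
        submodule_bot_or_top e hrep (W' k)
      -- step equivalence between consecutive levels
      have hstep : ∀ j : Fin (n + 1), (W' j.castSucc = ⊤ ↔ W' j.succ = ⊤) := by
        intro j
        constructor
        · intro htop
          obtain ⟨c, hc⟩ := hc_up
          have h1 := (hW' c j).1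
          rw [htop] at h1
          have hcons : (Fin.cons e (fun _ : Fin j.val => e) : Fin (j.val + 1) →
              Module.Dual ℂ P) = fun _ => e := funext fun i => Fin.cases rfl (fun _ => rfl) i
          have hval : raise c j (mkSym ℂ (fun _ : Fin j.val => e)) =
              φ (∑ i, c i • ((LinearMap.proj i).comp α)) •
                mkSym ℂ (fun _ : Fin (j.val + 1) => e) := by
            rw [hraise]
            conv_lhs => rw [hrepφ (∑ i, c i • ((LinearMap.proj i).comp α))]
            rw [mkSym_cons_smul_s13, hcons]
          have himg : Submodule.map (raise c j)
              (⊤ : Submodule ℂ (SymPow ℂ (Module.Dual ℂ P) j.val)) = ⊤ := by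
            rw [← sym_span_top (k := j.val) e hrep, Submodule.map_span, Set.image_singleton,
              hval, Submodule.span_singleton_smul_eq (IsUnit.mk0 _ hc), sym_span_top e hrep]
          rw [eq_top_iff, ← himg]
          exact h1
        · intro htop
          have h1 := (hW' (Pi.single j₀ 1 : Fin (n+2) → ℂ) j).2
          rw [htop] at h1
          have hval : lower (Pi.single j₀ 1 : Fin (n+2) → ℂ) j
                (mkSym ℂ (fun _ : Fin (j.val + 1) => e)) =
              (β e j₀) • mkSym ℂ (fun _ : Fin j.val => e) := by
            rw [hlower]
            congr 1
            simp [Pi.single_apply]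
          have hj₀' : β e j₀ ≠ 0 := hj₀
          have himg : Submodule.map (lower (Pi.single j₀ 1 : Fin (n+2) → ℂ) j)
              (⊤ : Submodule ℂ (SymPow ℂ (Module.Dual ℂ P) (j.val + 1))) = ⊤ := by
            rw [← sym_span_top (k := j.val + 1) e hrep, Submodule.map_span,
              Set.image_singleton, hval,
              Submodule.span_singleton_smul_eq (IsUnit.mk0 _ hj₀'), sym_span_top e hrep]
          rw [eq_top_iff, ← himg]
          exact h1
      have hiff : ∀ k : Fin (n + 2), (W' k = ⊤ ↔ W' 0 = ⊤) := by
        intro k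
        induction k using Fin.induction with
        | zero => exact Iff.rfl
        | succ j ih => exact (hstep j).symm.trans ih
      by_cases hz : W' 0 = ⊤
      · exact Or.inr fun k => (hiff k).mpr hz
      · refine Or.inl fun k => ?_
        rcases hbt k with h | h
        · exact h
        · exact absurd ((hiff k).mp h) hz
    · -- contrapositive: if β e = 0, a proper subrepresentation exists
      intro hsimp hbe
      set W' : ∀ k : Fin (n + 2), Submodule ℂ (SymPow ℂ (Module.Dual ℂ P) k.val) :=
        fun k => if k = 0 then ⊥ else ⊤ with hW'def
      have hcond : ∀ (c : Fin (n + 2) → ℂ) (k : Fin (n + 1)),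
          (W' k.castSucc).map (raise c k) ≤ W' k.succ ∧
          (W' k.succ).map (lower c k) ≤ W' k.castSucc := by
        intro c k
        constructor
        · have : W' k.succ = ⊤ := by
            rw [hW'def]; simp [Fin.succ_ne_zero]
          rw [this]; exact le_top
        · have hmap : (⊤ : Submodule ℂ (SymPow ℂ (Module.Dual ℂ P) (k.val + 1))).map
              (lower c k) = ⊥ := by
            rw [← sym_span_top (k := k.val + 1) e hrep, Submodule.map_span,
              Set.image_singleton, hlower]
            have : (∑ j, c j * β ((fun _ : Fin (k.val + 1) => e) 0) j) = 0 := by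
              simp [hbe]
            rw [this, zero_smul, Submodule.span_zero_singleton]
          refine le_trans (Submodule.map_mono le_top) ?_
          rw [hmap]
          exact bot_le
      rcases hsimp W' hcond with h | h
      · have h1 := h 1
        have h10 : (1 : Fin (n + 2)) ≠ 0 := by
          simp [Fin.ext_iff]
        simp only [hW'def, if_neg h10] at h1
        have : Nontrivial (SymPow ℂ (Module.Dual ℂ P) (1 : Fin (n+2)).val) :=
          nontrivial_of_ne _ _ (hgne (1 : Fin (n+2)).val)
        exact top_ne_bot h1
      · have h0 := h 0
        simp only [hW'def, if_pos] at h0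
        have : Nontrivial (SymPow ℂ (Module.Dual ℂ P) (0 : Fin (n+2)).val) :=
          nontrivial_of_ne _ _ (hgne (0 : Fin (n+2)).val)
        exact bot_ne_top h0
  -- assemble
  have hXne : (α ∘ₗ betaVee n P β ≠ 0) ↔ β e ≠ 0 := not_iff_not.mpr hX0
  refine ⟨hsq, hrle, ?_, ?_⟩
  · rw [hrank_iff, hXne]; exact hsimple
  · rw [hXne]; exact hsimple
end
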